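/- The function t ↦ Im φ(ζ(t), t) is differentiable on (0,1) with derivative d/dt [Im φ(ζ(t), t)] = ln( |1 + ζ(t)| / |1 − ζ(t)| ), and this derivative is strictly positive for every t ∈ (0,1); consequently t ↦ Im φ(ζ(t), t) is strictly increasing on (0,1). -/

import Mathlib

open Complex Set

/-- `φ(z,t) = i t Log(1+z) - i t Log(1-z) - Log z`, with principal logarithms. -/
noncomputable def phiFn (t : ℝ) (z : ℂ) : ℂ :=
  Complex.I * (t : ℂ) * Complex.log (1 + z) - Complex.I * (t : ℂ) * Complex.log (1 - z) -
    Complex.log z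

/-- The saddle point `ζ(t) = -i t + √(1-t²)`. -/
noncomputable def zetaPt (t : ℝ) : ℂ :=
  -Complex.I * (t : ℂ) + (Real.sqrt (1 - t ^ 2) : ℂ)

/-- The `z`-derivative `φ_z(z,t) = -1/z + i t/(1-z) + i t/(1+z)`. -/
noncomputable def phiZ (t : ℝ) (z : ℂ) : ℂ :=
  -1 / z + Complex.I * (t : ℂ) / (1 - z) + Complex.I * (t : ℂ) / (1 + z)

lemma zeta_re (t : ℝ) : (zetaPt t).re = Real.sqrt (1 - t ^ 2) := by simp [zetaPt]

lemma zeta_im (t : ℝ) : (zetaPt t).im = -t := by simp [zetaPt]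

lemma sq_s {t : ℝ} (ht : t ∈ Ioo (0 : ℝ) 1) :
    Real.sqrt (1 - t ^ 2) ^ 2 = 1 - t ^ 2 :=
  Real.sq_sqrt (by nlinarith [ht.1, ht.2])

lemma s_pos {t : ℝ} (ht : t ∈ Ioo (0 : ℝ) 1) : 0 < Real.sqrt (1 - t ^ 2) :=
  Real.sqrt_pos.2 (by nlinarith [ht.1, ht.2])

lemma s_lt_one {t : ℝ} (ht : t ∈ Ioo (0 : ℝ) 1) : Real.sqrt (1 - t ^ 2) < 1 := by
  nlinarith [sq_s ht, s_pos ht, ht.1, ht.2]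

lemma abs_one_add {t : ℝ} (ht : t ∈ Ioo (0 : ℝ) 1) :
    ‖1 + zetaPt t‖ = Real.sqrt (2 * (1 + Real.sqrt (1 - t ^ 2))) := by
  rw [Complex.norm_def, Complex.normSq_apply]
  congr 1
  simp only [Complex.add_re, Complex.add_im, Complex.one_re, Complex.one_im, zeta_re, zeta_im]
  nlinarith [sq_s ht]

lemma abs_one_sub {t : ℝ} (ht : t ∈ Ioo (0 : ℝ) 1) :
    ‖1 - zetaPt t‖ = Real.sqrt (2 * (1 - Real.sqrt (1 - t ^ 2))) := by
  rw [Complex.norm_def, Complex.normSq_apply]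
  congr 1
  simp only [Complex.sub_re, Complex.sub_im, Complex.one_re, Complex.one_im, zeta_re, zeta_im]
  nlinarith [sq_s ht]

lemma abs_zeta {t : ℝ} (ht : t ∈ Ioo (0 : ℝ) 1) : ‖zetaPt t‖ = 1 := by
  rw [Complex.norm_def, Complex.normSq_apply, zeta_re, zeta_im]
  rw [show Real.sqrt (1 - t ^ 2) * Real.sqrt (1 - t ^ 2) + -t * -t = 1 by nlinarith [sq_s ht]]
  exact Real.sqrt_one

/-- The real-variable model function. -/
noncomputable def Gfun (u : ℝ) : ℝ :=
  u * Real.log (1 + Real.sqrt (1 - u ^ 2)) / 2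
    - u * Real.log (1 - Real.sqrt (1 - u ^ 2)) / 2 + Real.arcsin u

lemma im_phi_eq {t : ℝ} (ht : t ∈ Ioo (0 : ℝ) 1) :
    (phiFn t (zetaPt t)).im = Gfun t := by
  set s := Real.sqrt (1 - t ^ 2) with hs
  have hs0 := s_pos ht
  have hs1 := s_lt_one ht
  have harg : (zetaPt t).arg = -Real.arcsin t := by
    rw [Complex.arg_of_re_nonneg (by rw [zeta_re]; positivity), abs_zeta ht, zeta_im]
    simp [Real.arcsin_neg]
  have him : ∀ w : ℂ, (Complex.I * (t : ℂ) * Complex.log w).im = t * Real.log (‖w‖) := by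
    intro w
    simp [Complex.mul_im, Complex.mul_re, Complex.log_re, Complex.log_im]
  have h1 : Real.log (‖1 + zetaPt t‖) = Real.log (2 * (1 + s)) / 2 := by
    rw [abs_one_add ht, Real.log_sqrt (by positivity)]
  have h2 : Real.log (‖1 - zetaPt t‖) = Real.log (2 * (1 - s)) / 2 := by
    rw [abs_one_sub ht, Real.log_sqrt (by nlinarith [s_lt_one ht])]
  have hl1 : Real.log (2 * (1 + s)) = Real.log 2 + Real.log (1 + s) :=
    Real.log_mul (by norm_num) (by positivity)
  have hl2 : Real.log (2 * (1 - s)) = Real.log 2 + Real.log (1 - s) :=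
    Real.log_mul (by norm_num) (by nlinarith [s_lt_one ht])
  simp only [phiFn, Complex.sub_im, him, Complex.log_im, harg, h1, h2, hl1, hl2, Gfun, ← hs]
  ring

lemma hasDerivAt_G {t : ℝ} (ht : t ∈ Ioo (0 : ℝ) 1) :
    HasDerivAt Gfun
      (Real.log (1 + Real.sqrt (1 - t ^ 2)) / 2
        - Real.log (1 - Real.sqrt (1 - t ^ 2)) / 2) t := by
  set s := Real.sqrt (1 - t ^ 2) with hs
  have hs0 := s_pos ht
  have hs1 := s_lt_one ht
  have ht0 := ht.1
  have ht1 := ht.2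
  have hsq := sq_s ht
  have hinner : HasDerivAt (fun u : ℝ => 1 - u ^ 2) (-(2 * t)) t := by
    simpa using ((hasDerivAt_pow 2 t).const_sub 1)
  have hsd : HasDerivAt (fun u : ℝ => Real.sqrt (1 - u ^ 2)) (-t / s) t := by
    have := (Real.hasDerivAt_sqrt (x := 1 - t ^ 2) (by nlinarith)).comp t hinner
    refine this.congr_deriv ?_
    rw [← hs]; field_simp
  have hlog1 : HasDerivAt (fun u : ℝ => Real.log (1 + Real.sqrt (1 - u ^ 2)))
      ((-t / s) / (1 + s)) t := by
    exact ((hsd.const_add 1).log (by positivity))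
  have hlog2 : HasDerivAt (fun u : ℝ => Real.log (1 - Real.sqrt (1 - u ^ 2)))
      ((-(-t / s)) / (1 - s)) t := by
    exact ((hsd.const_sub 1).log (ne_of_gt (by linarith)))
  have harc : HasDerivAt Real.arcsin (1 / s) t := by
    rw [hs]; exact Real.hasDerivAt_arcsin (by linarith) (by linarith)
  have hmul1 : HasDerivAt (fun u : ℝ => u * Real.log (1 + Real.sqrt (1 - u ^ 2)))
      (1 * Real.log (1 + s) + t * ((-t / s) / (1 + s))) t :=
    (hasDerivAt_id t).mul hlog1
  have hmul2 : HasDerivAt (fun u : ℝ => u * Real.log (1 - Real.sqrt (1 - u ^ 2)))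
      (1 * Real.log (1 - s) + t * ((-(-t / s)) / (1 - s))) t :=
    (hasDerivAt_id t).mul hlog2
  have := ((hmul1.div_const 2).sub (hmul2.div_const 2)).add harc
  refine this.congr_deriv ?_
  have h1s : (1 + s) ≠ 0 := by positivity
  have h2s : (1 - s) ≠ 0 := ne_of_gt (by linarith)
  have hs' : s ≠ 0 := hs0.ne'
  have hsq' : s ^ 2 = 1 - t ^ 2 := hsq
  field_simp
  nlinarith [hsq, hsq', hs0, mul_pos hs0 ht0]

theorem im_phi_zetaPt_strictMono :
    (∀ t ∈ Ioo (0 : ℝ) 1,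
      HasDerivAt (fun u : ℝ => (phiFn u (zetaPt u)).im)
        (Real.log (‖1 + zetaPt t‖ / ‖1 - zetaPt t‖)) t ∧
      0 < Real.log (‖1 + zetaPt t‖ / ‖1 - zetaPt t‖)) ∧
    StrictMonoOn (fun u : ℝ => (phiFn u (zetaPt u)).im) (Ioo (0 : ℝ) 1) := by
  have key : ∀ t ∈ Ioo (0 : ℝ) 1,
      HasDerivAt (fun u : ℝ => (phiFn u (zetaPt u)).im)
        (Real.log (‖1 + zetaPt t‖ / ‖1 - zetaPt t‖)) t ∧
      0 < Real.log (‖1 + zetaPt t‖ / ‖1 - zetaPt t‖) := by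
    intro t ht
    have hs0 := s_pos ht
    have hs1 := s_lt_one ht
    set s := Real.sqrt (1 - t ^ 2) with hs
    have habspos : (0:ℝ) < ‖1 - zetaPt t‖ := by
      rw [abs_one_sub ht, ← hs]; exact Real.sqrt_pos.2 (by linarith)
    have habspos' : (0:ℝ) < ‖1 + zetaPt t‖ := by
      rw [abs_one_add ht, ← hs]; positivity
    have hval : Real.log (‖1 + zetaPt t‖ / ‖1 - zetaPt t‖)
        = Real.log (1 + s) / 2 - Real.log (1 - s) / 2 := by
      rw [Real.log_div habspos'.ne' habspos.ne', abs_one_add ht, abs_one_sub ht,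
        Real.log_sqrt (by positivity), Real.log_sqrt (by nlinarith [s_lt_one ht]), ← hs,
        Real.log_mul (by norm_num) (by positivity), Real.log_mul (by norm_num) (by linarith)]
      ring
    constructor
    · rw [hval]
      refine (hasDerivAt_G ht).congr_of_eventuallyEq ?_
      filter_upwards [isOpen_Ioo.mem_nhds ht] with u hu
      exact im_phi_eq hu
    · apply Real.log_pos
      rw [lt_div_iff₀ habspos, one_mul, abs_one_add ht, abs_one_sub ht, ← hs]
      apply Real.sqrt_lt_sqrt (by linarith)
      linarith
  refine ⟨key, ?_⟩
  apply strictMonoOn_of_deriv_pos (convex_Ioo 0 1)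
  · intro x hx
    exact ((key x hx).1.differentiableAt).continuousAt.continuousWithinAt
  · intro x hx
    rw [interior_Ioo] at hx
    rw [(key x hx).1.deriv]
    exact (key x hx).2
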